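/- Let μ = μ_{R,B} be the self-affine measure for R = [[2,1],[0,2]] and B = {(0,0),(1,0)}. For every t ∈ [0,1], the level set L_t = {Λ : Λ is a spectrum of μ and dim_Be(Λ) = t} has the cardinality of the continuum, i.e. #L_t = 2^{ℵ₀}. -/

import Mathlib

open MeasureTheory Filter Set Metric
open scoped ENNReal

noncomputable section

/-- The plane with the Euclidean metric. -/
abbrev Plane : Type := EuclideanSpace ℝ (Fin 2)

/-- The point `(a, b)` of the Euclidean plane. -/
def pt (a b : ℝ) : Plane := WithLp.toLp 2 ![a, b]

/-- The self-affine measure `μ_{R,B}` for `R = [[2,1],[0,2]]`, `B = {(0,0),(1,0)}`: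
the pushforward of Lebesgue measure on `[0,1]` under `x ↦ (x, 0)`. -/
def muRB : Measure Plane :=
  Measure.map (fun x : ℝ => pt x 0) (volume.restrict (Set.Icc (0:ℝ) 1))

instance : IsProbabilityMeasure (volume.restrict (Set.Icc (0:ℝ) 1)) :=
  ⟨by simp [Real.volume_Icc]⟩

lemma measurable_pt0 : Measurable (fun x : ℝ => pt x 0) := by
  unfold pt
  refine (WithLp.measurable_toLp 2 (Fin 2 → ℝ)).comp (measurable_pi_lambda _ (fun i => ?_))
  fin_cases i
  · simp only [Matrix.cons_val_zero]
    exact measurable_id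
  · simp only [Matrix.cons_val_one, Matrix.head_cons]
    exact measurable_const

instance : IsProbabilityMeasure muRB :=
  Measure.isProbabilityMeasure_map measurable_pt0.aemeasurable

/-- The Fourier transform `μ̂(ξ) = ∫ e^{-2πi⟨ξ,x⟩} dμ(x)` of a measure on the plane. -/
def fourierTransform (μ : Measure Plane) (ξ : Plane) : ℂ :=
  ∫ x, Complex.exp ((-(2 * Real.pi * (inner ℝ ξ x : ℝ)) : ℝ) * Complex.I) ∂μ

/-- The exponential function `e_λ(x) = e^{-2πi⟨λ,x⟩}`. -/
def expFn (lam : Plane) : Plane → ℂ :=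
  fun x => Complex.exp ((-(2 * Real.pi * (inner ℝ lam x : ℝ)) : ℝ) * Complex.I)

lemma expFn_memLp (μ : Measure Plane) [IsFiniteMeasure μ] (lam : Plane) :
    MemLp (expFn lam) 2 μ := by
  refine MemLp.of_bound ?_ 1 ?_
  · apply Continuous.aestronglyMeasurable
    unfold expFn
    have h1 : Continuous fun x : Plane => (inner ℝ lam x : ℝ) :=
      continuous_const.inner continuous_id
    exact Complex.continuous_exp.comp
      ((Complex.continuous_ofReal.comp ((continuous_const.mul h1).neg)).mul continuous_const)
  · refine Eventually.of_forall fun x => ?_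
    unfold expFn
    rw [Complex.norm_exp_ofReal_mul_I]

/-- The exponential `e_λ` as an element of `L²(μ)`. -/
def expLp (μ : Measure Plane) [IsFiniteMeasure μ] (lam : Plane) : Lp ℂ 2 μ :=
  (expFn_memLp μ lam).toLp _

/-- `Λ` is an orthogonal set of `μ`: the exponentials `{e_λ : λ ∈ Λ}` form an
orthonormal family in `L²(μ)`. -/
def IsOrthogonalSet (μ : Measure Plane) [IsFiniteMeasure μ] (Λ : Set Plane) : Prop :=
  Orthonormal ℂ (fun lam : Λ => expLp μ lam)

/-- `Λ` is a spectrum of `μ`: the exponentials `{e_λ : λ ∈ Λ}` form an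
orthonormal basis of `L²(μ)`. -/
def IsSpectrum (μ : Measure Plane) [IsFiniteMeasure μ] (Λ : Set Plane) : Prop :=
  Orthonormal ℂ (fun lam : Λ => expLp μ lam) ∧
    (Submodule.span ℂ (Set.range (fun lam : Λ => expLp μ lam))).topologicalClosure = ⊤

/-- The upper `r`-Beurling density
`D_r^+(Λ) = limsup_{h→∞} sup_{x} #(Λ ∩ B(x,h)) / h^r`. -/
def beurlingDensity (r : ℝ) (Λ : Set Plane) : ℝ≥0∞ :=
  limsup (fun h : ℝ =>
    ⨆ x : Plane, ((Λ ∩ Metric.ball x h).encard : ℝ≥0∞) / ENNReal.ofReal (h ^ r)) atTop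

/-- The upper `r`-density (centered at the origin)
`B_r^+(Λ) = limsup_{h→∞} #(Λ ∩ B(0,h)) / h^r`. -/
def upperDensity (r : ℝ) (Λ : Set Plane) : ℝ≥0∞ :=
  limsup (fun h : ℝ =>
    ((Λ ∩ Metric.ball (0 : Plane) h).encard : ℝ≥0∞) / ENNReal.ofReal (h ^ r)) atTop

/-- The Beurling dimension `dim_Be(Λ) = sup {r > 0 : D_r^+(Λ) = ∞}`
(equal to `0` when the set is empty, by the convention `sSup ∅ = 0` in `ℝ`). -/
def beurlingDim (Λ : Set Plane) : ℝ :=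
  sSup {r : ℝ | 0 < r ∧ beurlingDensity r Λ = ⊤}

/-- The Banach dimension `dim_Ba(Λ) = sup {r > 0 : B_r^+(Λ) = ∞}`. -/
def banachDim (Λ : Set Plane) : ℝ :=
  sSup {r : ℝ | 0 < r ∧ upperDensity r Λ = ⊤}

/-- The sign of an integer, as a real number. -/
def isgn (n : ℤ) : ℝ := (Int.sign n : ℝ)

end


noncomputable section
namespace SpecProof

open Complex

set_option maxHeartbeats 1000000

/-- The basic frequency integral over `[0,1]`. -/
def EE (c : ℝ) : ℂ :=
  ∫ u in Set.Icc (0:ℝ) 1, Complex.exp (((2 * Real.pi * c * u : ℝ) : ℂ) * Complex.I)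

lemma EE_zero : EE 0 = 1 := by
  have : ∀ u : ℝ, Complex.exp (((2 * Real.pi * (0:ℝ) * u : ℝ) : ℂ) * Complex.I) = 1 := by
    intro u; norm_num
  simp only [EE, this]
  simp [integral_const]

lemma EE_ne (c : ℝ) (hc : c ≠ 0) :
    EE c = (Complex.exp (((2 * Real.pi * c : ℝ) : ℂ) * Complex.I) - 1) /
      (((2 * Real.pi * c : ℝ) : ℂ) * Complex.I) := by
  have hπ : (Real.pi : ℝ) ≠ 0 := Real.pi_ne_zero
  have hc' : (((2 * Real.pi * c : ℝ) : ℂ) * Complex.I) ≠ 0 :=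
    mul_ne_zero (Complex.ofReal_ne_zero.mpr
      (mul_ne_zero (mul_ne_zero two_ne_zero hπ) hc)) Complex.I_ne_zero
  have key := integral_exp_mul_complex (a := (0:ℝ)) (b := 1) hc'
  have hfun : (fun u : ℝ => Complex.exp (((2 * Real.pi * c * u : ℝ) : ℂ) * Complex.I))
      = fun u : ℝ => Complex.exp ((((2 * Real.pi * c : ℝ) : ℂ) * Complex.I) * u) := by
    funext u; congr 1; push_cast; ring
  rw [EE, hfun, MeasureTheory.integral_Icc_eq_integral_Ioc,
    ← intervalIntegral.integral_of_le (by norm_num : (0:ℝ) ≤ 1), key]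
  norm_num

lemma EE_eq_zero_iff (c : ℝ) (hc : c ≠ 0) : EE c = 0 ↔ ∃ n : ℤ, c = (n : ℝ) := by
  have hπ : (Real.pi : ℝ) ≠ 0 := Real.pi_ne_zero
  have hc' : (((2 * Real.pi * c : ℝ) : ℂ) * Complex.I) ≠ 0 :=
    mul_ne_zero (Complex.ofReal_ne_zero.mpr
      (mul_ne_zero (mul_ne_zero two_ne_zero hπ) hc)) Complex.I_ne_zero
  rw [EE_ne c hc, div_eq_zero_iff]
  simp only [hc', or_false, sub_eq_zero]
  rw [Complex.exp_eq_one_iff]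
  constructor
  · rintro ⟨n, hn⟩
    refine ⟨n, ?_⟩
    have h2 : (2 * Real.pi * c : ℝ) = ((n : ℝ) * (2 * Real.pi) : ℝ) := by
      have hC : ((2 * Real.pi * c : ℝ) : ℂ) = (((n : ℝ) * (2 * Real.pi) : ℝ) : ℂ) := by
        apply mul_right_cancel₀ Complex.I_ne_zero
        push_cast at hn ⊢
        linear_combination hn
      exact_mod_cast hC
    have h3 : (2 * Real.pi) * c = (2 * Real.pi) * (n : ℝ) := by linear_combination h2
    exact mul_left_cancel₀ (by positivity) h3
  · rintro ⟨n, hn⟩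
    exact ⟨n, by rw [hn]; push_cast; ring⟩

lemma expFn_continuous (a : Plane) : Continuous (expFn a) := by
  unfold expFn
  have h1 : Continuous fun x : Plane => (inner ℝ a x : ℝ) :=
    continuous_const.inner continuous_id
  exact Complex.continuous_exp.comp
    ((Complex.continuous_ofReal.comp ((continuous_const.mul h1).neg)).mul continuous_const)

lemma inner_pt0 (a : Plane) (u : ℝ) : (inner ℝ a (pt u 0) : ℝ) = a 0 * u := by
  rw [PiLp.inner_apply]
  simp [pt, Fin.sum_univ_two, RCLike.inner_apply]
  ring

lemma expFn_pt (a : Plane) (u : ℝ) :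
    expFn a (pt u 0) = Complex.exp (((-(2 * Real.pi * (a 0) * u) : ℝ) : ℂ) * Complex.I) := by
  unfold expFn
  rw [inner_pt0]
  congr 1
  push_cast
  ring

lemma conj_exp_I (r : ℝ) :
    (starRingEnd ℂ) (Complex.exp ((r : ℂ) * Complex.I)) =
      Complex.exp (((-r : ℝ) : ℂ) * Complex.I) := by
  rw [← Complex.exp_conj, map_mul, Complex.conj_I, Complex.conj_ofReal]
  push_cast
  ring_nf

lemma inner_expLp_f (a : Plane) (f : MeasureTheory.Lp ℂ 2 muRB) :
    (inner ℂ (expLp muRB a) f : ℂ) =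
      ∫ u in Set.Icc (0:ℝ) 1,
        Complex.exp (((2 * Real.pi * (a 0) * u : ℝ) : ℂ) * Complex.I) * f (pt u 0) := by
  rw [MeasureTheory.L2.inner_def]
  have h1 : (∫ x, (inner ℂ (expLp muRB a x) (f x) : ℂ) ∂muRB)
      = ∫ x, (starRingEnd ℂ) (expFn a x) * f x ∂muRB := by
    apply MeasureTheory.integral_congr_ae
    filter_upwards [MeasureTheory.MemLp.coeFn_toLp (expFn_memLp muRB a)] with x hx
    rw [RCLike.inner_apply]
    unfold expLp
    rw [hx]
    ring
  rw [h1]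
  have hmeas : MeasureTheory.AEStronglyMeasurable
      (fun x : Plane => (starRingEnd ℂ) (expFn a x) * f x) muRB :=
    ((Complex.continuous_conj.comp (expFn_continuous a)).aestronglyMeasurable).mul
      (MeasureTheory.Lp.aestronglyMeasurable f)
  have h2 : (∫ x, (starRingEnd ℂ) (expFn a x) * f x ∂muRB)
      = ∫ u in Set.Icc (0:ℝ) 1, (starRingEnd ℂ) (expFn a (pt u 0)) * f (pt u 0) := by
    exact MeasureTheory.integral_map measurable_pt0.aemeasurable hmeas
  rw [h2]
  have hfun : (fun u : ℝ => (starRingEnd ℂ) (expFn a (pt u 0)) * f (pt u 0))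
      = fun u : ℝ =>
        Complex.exp (((2 * Real.pi * (a 0) * u : ℝ) : ℂ) * Complex.I) * f (pt u 0) := by
    funext u
    rw [expFn_pt, show ((-(2 * Real.pi * (a 0) * u) : ℝ) : ℂ)
      = ((-(2 * Real.pi * (a 0) * u) : ℝ) : ℂ) from rfl, conj_exp_I]
    norm_num
  rw [hfun]

lemma inner_expLp (a b : Plane) :
    (inner ℂ (expLp muRB a) (expLp muRB b) : ℂ) = EE (a 0 - b 0) := by
  rw [inner_expLp_f]
  have hae : (fun u : ℝ => (expLp muRB b : Plane → ℂ) (pt u 0))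
      =ᵐ[MeasureTheory.volume.restrict (Set.Icc (0:ℝ) 1)]
      (fun u : ℝ => expFn b (pt u 0)) :=
    MeasureTheory.ae_eq_comp measurable_pt0.aemeasurable
      (MeasureTheory.MemLp.coeFn_toLp (expFn_memLp muRB b))
  have h1 : (∫ u in Set.Icc (0:ℝ) 1,
        Complex.exp (((2 * Real.pi * (a 0) * u : ℝ) : ℂ) * Complex.I) * (expLp muRB b) (pt u 0))
      = ∫ u in Set.Icc (0:ℝ) 1,
        Complex.exp (((2 * Real.pi * (a 0) * u : ℝ) : ℂ) * Complex.I) * expFn b (pt u 0) :=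
    MeasureTheory.integral_congr_ae (hae.mono fun u hu => by dsimp only at hu ⊢; rw [hu])
  rw [h1]
  have hfun : (fun u : ℝ =>
        Complex.exp (((2 * Real.pi * (a 0) * u : ℝ) : ℂ) * Complex.I) * expFn b (pt u 0))
      = fun u : ℝ =>
        Complex.exp (((2 * Real.pi * (a 0 - b 0) * u : ℝ) : ℂ) * Complex.I) := by
    funext u
    rw [expFn_pt, ← Complex.exp_add]
    congr 1
    push_cast
    ring
  rw [hfun, EE]

lemma ne_sub_coords {Λ : Set Plane} (h : IsOrthogonalSet muRB Λ) :
    ∀ a ∈ Λ, ∀ b ∈ Λ, a ≠ b → (a 0 ≠ b 0 ∧ ∃ n : ℤ, a 0 - b 0 = (n : ℝ)) := by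
  classical
  intro a ha b hb hab
  have h2 := (orthonormal_iff_ite.mp h) ⟨a, ha⟩ ⟨b, hb⟩
  rw [if_neg (by simp [Subtype.ext_iff, hab] : ¬ ((⟨a, ha⟩ : Λ) = ⟨b, hb⟩)),
    inner_expLp] at h2
  have hne : a 0 - b 0 ≠ 0 := by
    intro h0
    rw [h0, EE_zero] at h2
    exact one_ne_zero h2
  exact ⟨sub_ne_zero.mp hne, (EE_eq_zero_iff _ hne).mp h2⟩

lemma isOrthogonalSet_of (Λ : Set Plane)
    (h : ∀ a ∈ Λ, ∀ b ∈ Λ, a ≠ b → (a 0 ≠ b 0 ∧ ∃ n : ℤ, a 0 - b 0 = (n : ℝ))) :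
    IsOrthogonalSet muRB Λ := by
  classical
  unfold IsOrthogonalSet
  rw [orthonormal_iff_ite]
  intro i j
  by_cases hij : i = j
  · rw [if_pos hij, hij, inner_expLp, sub_self, EE_zero]
  · rw [if_neg hij, inner_expLp]
    have hcoe : (i : Plane) ≠ (j : Plane) := fun hc => hij (Subtype.ext hc)
    obtain ⟨hne, n, hn⟩ := h i i.2 j j.2 hcoe
    rw [EE_eq_zero_iff _ (sub_ne_zero.mpr hne)]
    exact ⟨n, hn⟩

lemma countable_of_isOrthogonalSet {Λ : Set Plane} (h : IsOrthogonalSet muRB Λ) :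
    Λ.Countable := by
  rcases Λ.eq_empty_or_nonempty with rfl | ⟨a₀, ha₀⟩
  · exact countable_empty
  have key := ne_sub_coords h
  rw [← Set.countable_coe_iff]
  have hex : ∀ b : Λ, ∃ n : ℤ, (b : Plane) 0 - a₀ 0 = (n : ℝ) := by
    intro b
    by_cases hb : (b : Plane) = a₀
    · exact ⟨0, by rw [hb]; simp⟩
    · exact (key b b.2 a₀ ha₀ hb).2
  choose F hF using hex
  have hinj : Function.Injective F := by
    intro b b' hbb
    have h0 : (b : Plane) 0 = (b' : Plane) 0 := by
      have h1 := hF b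
      have h2 := hF b'
      rw [hbb] at h1
      linarith [h1, h2]
    by_contra hne
    have hcoe : (b : Plane) ≠ (b' : Plane) := fun hc => hne (Subtype.ext hc)
    exact (key b b.2 b' b'.2 hcoe).1 h0
  exact hinj.countable

open MeasureTheory in
lemma span_top (Λ : Set Plane) (hΛ : ∀ n : ℤ, ∃ lam ∈ Λ, lam 0 = (n : ℝ)) :
    (Submodule.span ℂ
      (Set.range (fun lam : Λ => expLp muRB lam))).topologicalClosure = ⊤ := by
  rw [Submodule.topologicalClosure_eq_top_iff, Submodule.eq_bot_iff]
  intro f hf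
  have hfe : ∀ lam : Λ, (inner ℂ (expLp muRB (lam : Plane)) f : ℂ) = 0 := fun lam =>
    (Submodule.mem_orthogonal _ _).mp hf _ (Submodule.subset_span ⟨lam, rfl⟩)
  set F : ℝ → ℂ := fun u => f (pt u 0) with hFdef
  have hFmeas : Measurable F := (Lp.stronglyMeasurable f).measurable.comp measurable_pt0
  have key : ∀ n : ℤ, (∫ u in Set.Icc (0:ℝ) 1,
      Complex.exp (((2 * Real.pi * ((n : ℤ) : ℝ) * u : ℝ) : ℂ) * Complex.I) * F u) = 0 := by
    intro n
    obtain ⟨lam, hlam, h0⟩ := hΛ n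
    have h2 := hfe ⟨lam, hlam⟩
    rw [inner_expLp_f] at h2
    dsimp only at h2
    rw [h0] at h2
    exact h2
  haveI : Fact ((0:ℝ) < 1) := ⟨one_pos⟩
  set G : AddCircle (1:ℝ) → ℂ := AddCircle.liftIoc (1:ℝ) (0:ℝ) F with hGdef
  have hGmeas : Measurable G := by
    have hGeq : G = (F ∘ Subtype.val) ∘ (AddCircle.measurableEquivIoc (1:ℝ) (0:ℝ)) := rfl
    rw [hGeq]
    exact (hFmeas.comp measurable_subtype_coe).comp
      (AddCircle.measurableEquivIoc (1:ℝ) (0:ℝ)).measurable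
  have hmp := AddCircle.measurePreserving_mk (1:ℝ) 0
  have hres : volume.restrict (Set.Icc (0:ℝ) 1)
      = volume.restrict (Set.Ioc (0:ℝ) (0+1)) := by
    rw [zero_add]
    exact (Measure.restrict_congr_set Ioc_ae_eq_Icc).symm
  have hcompeq : F =ᵐ[volume.restrict (Set.Ioc (0:ℝ) (0+1))]
      (G ∘ (fun x : ℝ => (x : AddCircle (1:ℝ)))) := by
    filter_upwards [ae_restrict_mem measurableSet_Ioc] with u hu
    exact (AddCircle.liftIoc_coe_apply hu).symm
  have hFmem : MemLp F 2 (volume.restrict (Set.Ioc (0:ℝ) (0+1))) := by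
    rw [← hres]
    exact (memLp_map_measure_iff (Lp.aestronglyMeasurable f)
      measurable_pt0.aemeasurable).mp (Lp.memLp f)
  have hvol : (volume : Measure (AddCircle (1:ℝ))) = AddCircle.haarAddCircle := by
    rw [AddCircle.volume_eq_smul_haarAddCircle]
    simp
  have hGmem : MemLp G 2 (AddCircle.haarAddCircle) := by
    rw [← hvol, ← hmp.map_eq]
    exact (memLp_map_measure_iff hGmeas.stronglyMeasurable.aestronglyMeasurable
      hmp.measurable.aemeasurable).mpr (hFmem.ae_eq hcompeq)
  have hcoeff : ∀ m : ℤ, fourierCoeff G m = 0 := by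
    intro m
    rw [fourierCoeff_eq_intervalIntegral G m 0,
      intervalIntegral.integral_of_le (by norm_num : (0:ℝ) ≤ 0+1)]
    have h2 : (∫ x in Set.Ioc (0:ℝ) ((0:ℝ)+1),
          (fourier (-m)) ((x : ℝ) : AddCircle (1:ℝ)) • G ((x : ℝ) : AddCircle (1:ℝ)))
        = ∫ x in Set.Ioc (0:ℝ) ((0:ℝ)+1),
          Complex.exp (((2 * Real.pi * ((-m : ℤ) : ℝ) * x : ℝ) : ℂ) * Complex.I) * F x := by
      apply integral_congr_ae
      filter_upwards [hcompeq] with u hu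
      have hu' : F u = G ((u : ℝ) : AddCircle (1:ℝ)) := hu
      rw [fourier_coe_apply, smul_eq_mul, ← hu']
      congr 1
      push_cast
      ring_nf
    rw [h2, show ((0:ℝ)+1) = 1 from by norm_num, ← integral_Icc_eq_integral_Ioc, key (-m)]
    simp
  set gLp : Lp ℂ 2 (AddCircle.haarAddCircle (T := 1)) := hGmem.toLp G with hgLp
  have hcoeff' : ∀ m : ℤ, fourierCoeff (⇑gLp : AddCircle (1:ℝ) → ℂ) m = 0 := by
    intro m
    rw [← hcoeff m]
    unfold fourierCoeff
    apply integral_congr_ae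
    filter_upwards [MemLp.coeFn_toLp hGmem] with x hx
    rw [hx]
  have hzero : gLp = 0 := by
    rw [← (fourierBasis (T := 1)).repr.map_eq_zero_iff]
    ext m
    rw [fourierBasis_repr gLp m, hcoeff' m]
    simp
  have hGae : G =ᵐ[AddCircle.haarAddCircle] 0 := by
    have h2 : (MemLp.toLp G hGmem) = (0 : Lp ℂ 2 (AddCircle.haarAddCircle (T := 1))) := by
      rw [← hgLp]; exact hzero
    refine (MemLp.coeFn_toLp hGmem).symm.trans ?_
    rw [h2]
    exact Lp.coeFn_zero ℂ 2 _
  have hmap : Measure.map (fun x : ℝ => (x : AddCircle (1:ℝ)))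
      (volume.restrict (Set.Ioc (0:ℝ) (0+1))) = volume := hmp.map_eq
  have hFae : F =ᵐ[volume.restrict (Set.Ioc (0:ℝ) (0+1))] 0 := by
    refine hcompeq.trans ?_
    have h3 : (G ∘ (fun x : ℝ => (x : AddCircle (1:ℝ))))
        =ᵐ[volume.restrict (Set.Ioc (0:ℝ) (0+1))]
        ((0 : AddCircle (1:ℝ) → ℂ) ∘ (fun x : ℝ => (x : AddCircle (1:ℝ)))) :=
      ae_eq_comp (f := fun x : ℝ => (x : AddCircle (1:ℝ)))
        hmp.measurable.aemeasurable (by rw [hmap, hvol]; exact hGae)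
    exact h3
  have hfae : (⇑f : Plane → ℂ) =ᵐ[muRB] 0 := by
    have hset : MeasurableSet {x : Plane | (⇑f : Plane → ℂ) x = 0} :=
      (Lp.stronglyMeasurable f).measurable (measurableSet_singleton 0)
    have : ∀ᵐ x ∂(Measure.map (fun x : ℝ => pt x 0) (volume.restrict (Set.Icc (0:ℝ) 1))),
        (⇑f : Plane → ℂ) x = 0 := by
      rw [ae_map_iff measurable_pt0.aemeasurable hset]
      rw [show (volume.restrict (Set.Icc (0:ℝ) 1)) = volume.restrict (Set.Ioc (0:ℝ) (0+1))
        from hres]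
      exact hFae
    exact this
  exact Lp.eq_zero_iff_ae_eq_zero.mpr hfae

/-! ### The construction of the spectra -/

/-- Increasing profile function on nonnegative reals. -/
def psi (t : ℝ) (y : ℝ) : ℝ := if t = 0 then Real.exp y else y ^ (1/t)

/-- Second coordinate of the spectrum points. -/
def gf (t : ℝ) (n : ℤ) : ℝ := isgn n * psi t |(n : ℝ)|

/-- The points of the spectrum. -/
def PP (t s : ℝ) (n : ℤ) : Plane := pt (n : ℝ) (gf t n + s)

/-- The spectrum. -/
def lamSet (t s : ℝ) : Set Plane := Set.range (PP t s)

lemma pt_app0 (a b : ℝ) : pt a b 0 = a := rfl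

lemma pt_app1 (a b : ℝ) : pt a b 1 = b := rfl

lemma gf_zero (t : ℝ) : gf t 0 = 0 := by simp [gf, isgn]

lemma gf_neg (t : ℝ) (n : ℤ) : gf t (-n) = - gf t n := by
  unfold gf isgn
  rw [Int.sign_neg]
  push_cast
  rw [abs_neg]
  ring

lemma gf_of_nonneg {t : ℝ} (ht : t ≠ 0) {n : ℤ} (hn : 0 ≤ n) :
    gf t n = (n : ℝ) ^ (1/t) := by
  rcases eq_or_lt_of_le hn with h0 | h0
  · rw [← h0, gf_zero, show (((0:ℤ) : ℝ)) = (0:ℝ) from by norm_num,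
      Real.zero_rpow (one_div_ne_zero ht)]
  · unfold gf isgn psi
    rw [Int.sign_eq_one_iff_pos.mpr h0, if_neg ht,
      _root_.abs_of_nonneg (by exact_mod_cast hn : (0:ℝ) ≤ (n:ℝ))]
    norm_num

lemma gf_of_nonneg_exp {n : ℤ} (hn : 0 < n) : gf 0 n = Real.exp (n : ℝ) := by
  unfold gf isgn psi
  rw [Int.sign_eq_one_iff_pos.mpr hn, if_pos rfl,
    _root_.abs_of_nonneg (by exact_mod_cast hn.le : (0:ℝ) ≤ (n:ℝ))]
  norm_num

lemma real_superadd {x y : ℝ} (hx : 0 ≤ x) (hy : 0 ≤ y) {p : ℝ} (hp : 1 ≤ p) :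
    x ^ p + y ^ p ≤ (x + y) ^ p := by
  have h2 := NNReal.add_rpow_le_rpow_add (x.toNNReal) (y.toNNReal) hp
  rw [← NNReal.coe_le_coe] at h2
  push_cast [NNReal.coe_rpow, Real.coe_toNNReal _ hx, Real.coe_toNNReal _ hy] at h2
  exact h2

/-- The interval-diameter bound for the count of points of the spectrum. -/
def Dfun (t h : ℝ) : ℝ := if t = 0 then Real.log (1 + 2*h) else (2*h) ^ t

lemma Dfun_nonneg (t h : ℝ) (hh : 1 ≤ h) : 0 ≤ Dfun t h := by
  unfold Dfun
  split
  · exact Real.log_nonneg (by linarith)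
  · exact Real.rpow_nonneg (by linarith) t

lemma gap_aux (t h : ℝ) (ht0 : 0 ≤ t) (ht1 : t ≤ 1) (hh : 1 ≤ h)
    {m n : ℤ} (hm : 0 ≤ m) (hmn : m ≤ n) (hgap : gf t n - gf t m ≤ 2*h) :
    (n : ℝ) - (m : ℝ) ≤ Dfun t h := by
  have hn : 0 ≤ n := le_trans hm hmn
  by_cases ht : t = 0
  · subst ht
    have hexp : Real.exp ((n : ℝ) - m) - 1 ≤ gf 0 n - gf 0 m := by
      rcases eq_or_lt_of_le hm with h0 | h0
      · rw [← h0, gf_zero]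
        rcases eq_or_lt_of_le hn with h1 | h1
        · rw [← h1, gf_zero]
          norm_num
        · rw [gf_of_nonneg_exp h1]
          push_cast
          norm_num
      · have hn1 : 0 < n := lt_of_lt_of_le h0 hmn
        rw [gf_of_nonneg_exp h0, gf_of_nonneg_exp hn1]
        have e1 : Real.exp ((n:ℝ)) = Real.exp ((n:ℝ) - m) * Real.exp (m:ℝ) := by
          rw [← Real.exp_add]; ring_nf
        have e2 : (1:ℝ) ≤ Real.exp ((n:ℝ) - m) :=
          Real.one_le_exp (by exact_mod_cast sub_nonneg.mpr hmn)
        have e3 : (1:ℝ) ≤ Real.exp (m:ℝ) :=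
          Real.one_le_exp (by exact_mod_cast hm)
        nlinarith
    have h2 : Real.exp ((n : ℝ) - m) ≤ 1 + 2*h := by linarith
    unfold Dfun
    rw [if_pos rfl]
    rw [Real.le_log_iff_exp_le (by linarith : (0:ℝ) < 1 + 2*h)]
    exact h2
  · have htpos : 0 < t := lt_of_le_of_ne ht0 (Ne.symm ht)
    have ha1 : 1 ≤ 1/t := by
      rw [le_div_iff₀ htpos]
      linarith
    have ha0 : (1:ℝ)/t ≠ 0 := by positivity
    have hmr : (0:ℝ) ≤ (m:ℝ) := by exact_mod_cast hm
    have hnm : (0:ℝ) ≤ (n:ℝ) - m := by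
      have : (m:ℝ) ≤ n := by exact_mod_cast hmn
      linarith
    have hsup := real_superadd hnm hmr ha1
    rw [sub_add_cancel] at hsup
    have h5 : ((n:ℝ) - m) ^ (1/t) ≤ 2*h := by
      rw [gf_of_nonneg ht hn, gf_of_nonneg ht hm] at hgap
      linarith
    have h6 : (((n:ℝ) - m) ^ (1/t)) ^ t ≤ (2*h) ^ t :=
      Real.rpow_le_rpow (Real.rpow_nonneg hnm _) h5 ht0
    rw [← Real.rpow_mul hnm, one_div_mul_cancel ht, Real.rpow_one] at h6
    unfold Dfun
    rw [if_neg ht]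
    exact h6

lemma gap_main (t h : ℝ) (ht0 : 0 ≤ t) (ht1 : t ≤ 1) (hh : 1 ≤ h)
    {m n : ℤ} (hm : 0 ≤ m) (hn : 0 ≤ n) (hgap : |gf t m - gf t n| ≤ 2*h) :
    |(m : ℝ) - n| ≤ Dfun t h := by
  rcases le_total m n with hmn | hmn
  · rw [abs_sub_comm, _root_.abs_of_nonneg (by
      have : (m:ℝ) ≤ n := by exact_mod_cast hmn
      linarith)]
    exact gap_aux t h ht0 ht1 hh hm hmn (by
      have := neg_abs_le (gf t m - gf t n)
      linarith)
  · rw [_root_.abs_of_nonneg (by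
      have : (n:ℝ) ≤ m := by exact_mod_cast hmn
      linarith)]
    exact gap_aux t h ht0 ht1 hh hn hmn (by
      have := le_abs_self (gf t m - gf t n)
      linarith)

lemma int_encard_le {S : Set ℤ} {D : ℝ} (hD : 0 ≤ D)
    (hgap : ∀ m ∈ S, ∀ n ∈ S, |(m : ℝ) - n| ≤ D) :
    (S.encard : ℝ≥0∞) ≤ ENNReal.ofReal (2*D+1) := by
  rcases S.eq_empty_or_nonempty with rfl | ⟨a, ha⟩
  · simp
  have hfl : ((⌊D⌋ : ℤ) : ℝ) ≤ D := Int.floor_le D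
  have hfl0 : 0 ≤ ⌊D⌋ := Int.floor_nonneg.mpr hD
  have hsub : S ⊆ Set.Icc (a - ⌊D⌋) (a + ⌊D⌋) := by
    intro n hn
    have h1 := hgap n hn a ha
    have h2 : |n - a| ≤ ⌊D⌋ := Int.le_floor.mpr (by push_cast; exact h1)
    have h3 := (abs_le.mp h2)
    constructor <;> omega
  have h4 : S.encard ≤ (Set.Icc (a - ⌊D⌋) (a + ⌊D⌋)).encard := Set.encard_mono hsub
  rw [show Set.Icc (a - ⌊D⌋) (a + ⌊D⌋) = (↑(Finset.Icc (a - ⌊D⌋) (a + ⌊D⌋)) : Set ℤ) from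
    (Finset.coe_Icc _ _).symm, Set.encard_coe_eq_coe_finsetCard, Int.card_Icc] at h4
  have h5 : (a + ⌊D⌋ + 1 - (a - ⌊D⌋)) = 2*⌊D⌋ + 1 := by ring
  rw [h5] at h4
  calc (S.encard : ℝ≥0∞) ≤ (((2*⌊D⌋ + 1).toNat : ℕ∞) : ℝ≥0∞) := by
        exact_mod_cast ENat.toENNReal_le.mpr h4
  _ = (((2*⌊D⌋ + 1).toNat : ℕ) : ℝ≥0∞) := by simp
  _ = ENNReal.ofReal (((2*⌊D⌋ + 1).toNat : ℕ) : ℝ) := (ENNReal.ofReal_natCast _).symm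
  _ ≤ ENNReal.ofReal (2*D+1) := by
      apply ENNReal.ofReal_le_ofReal
      have h6 : (((2*⌊D⌋ + 1).toNat : ℕ) : ℝ) = ((2*⌊D⌋+1 : ℤ) : ℝ) := by
        exact_mod_cast Int.toNat_of_nonneg (show (0:ℤ) ≤ 2*⌊D⌋+1 by omega)
      rw [h6]
      push_cast
      linarith

lemma coord_abs (y x : Plane) (i : Fin 2) : |y i - x i| ≤ dist y x := by
  rw [EuclideanSpace.dist_eq, ← Real.sqrt_sq_eq_abs]
  apply Real.sqrt_le_sqrt
  have h1 : (y i - x i)^2 = dist (y i) (x i) ^ 2 := by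
    rw [Real.dist_eq, _root_.sq_abs]
  rw [h1]
  exact Finset.single_le_sum (f := fun j => dist (y j) (x j) ^ 2)
    (fun j _ => sq_nonneg _) (Finset.mem_univ i)

lemma PP_inj (t s : ℝ) : Function.Injective (PP t s) := by
  intro m n hmn
  have h0 : ((m : ℝ)) = n := congrFun (congrArg WithLp.ofLp hmn) 0
  exact_mod_cast h0

lemma PP_app1 (t s : ℝ) (n : ℤ) : PP t s n 1 = gf t n + s := rfl

lemma count_upper (t s : ℝ) (ht0 : 0 ≤ t) (ht1 : t ≤ 1) (x : Plane) (h : ℝ) (hh : 1 ≤ h) :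
    ((lamSet t s ∩ Metric.ball x h).encard : ℝ≥0∞)
      ≤ ENNReal.ofReal (2 * (2 * Dfun t h + 1)) := by
  classical
  set T : Set ℤ := {n : ℤ | PP t s n ∈ Metric.ball x h} with hT
  have hsub : lamSet t s ∩ Metric.ball x h ⊆ (PP t s) '' T := by
    rintro y ⟨⟨n, rfl⟩, hy⟩
    exact ⟨n, hy, rfl⟩
  have hball2 : ∀ n ∈ T, |gf t n + s - x 1| < h := by
    intro n hn
    exact lt_of_le_of_lt (by rw [← PP_app1 t s n]; exact coord_abs _ x 1)
      (Metric.mem_ball.mp hn)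
  have hgap : ∀ m ∈ T, ∀ n ∈ T, |gf t m - gf t n| ≤ 2*h := by
    intro m hm n hn
    have h1 := hball2 m hm
    have h2 := hball2 n hn
    have h3 : gf t m - gf t n = (gf t m + s - x 1) - (gf t n + s - x 1) := by ring
    rw [h3, sub_eq_add_neg]
    refine le_trans (abs_add_le _ _) ?_
    rw [abs_neg]
    linarith
  have hsplit : T ⊆ (T ∩ {n : ℤ | 0 ≤ n}) ∪ (T ∩ {n : ℤ | n ≤ 0}) := by
    intro n hn
    rcases le_total 0 n with h1 | h1
    · exact Or.inl ⟨hn, h1⟩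
    · exact Or.inr ⟨hn, h1⟩
  have hDpos := Dfun_nonneg t h hh
  have hpos : ∀ m ∈ T ∩ {n : ℤ | 0 ≤ n}, ∀ n ∈ T ∩ {n : ℤ | 0 ≤ n},
      |(m:ℝ) - n| ≤ Dfun t h := by
    rintro m ⟨hm, hm0⟩ n ⟨hn, hn0⟩
    exact gap_main t h ht0 ht1 hh hm0 hn0 (hgap m hm n hn)
  have hneg : ∀ m ∈ T ∩ {n : ℤ | n ≤ 0}, ∀ n ∈ T ∩ {n : ℤ | n ≤ 0},
      |(m:ℝ) - n| ≤ Dfun t h := by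
    rintro m ⟨hm, hm0⟩ n ⟨hn, hn0⟩
    have h1 : |gf t (-m) - gf t (-n)| = |gf t m - gf t n| := by
      rw [gf_neg, gf_neg, ← abs_neg]
      ring_nf
    have h2 := gap_main t h ht0 ht1 hh (neg_nonneg.mpr hm0) (neg_nonneg.mpr hn0)
      (by rw [h1]; exact hgap m hm n hn)
    rw [show |((-m : ℤ):ℝ) - ((-n : ℤ):ℝ)| = |(m:ℝ) - n| from by push_cast; rw [← abs_neg]; ring_nf] at h2
    exact h2
  have hcard : (lamSet t s ∩ Metric.ball x h).encard ≤ T.encard := by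
    refine le_trans (Set.encard_mono hsub) ?_
    rw [(PP_inj t s).encard_image]
  have hcardT : (T.encard : ℝ≥0∞)
      ≤ ENNReal.ofReal (2 * Dfun t h + 1) + ENNReal.ofReal (2 * Dfun t h + 1) := by
    have hT2 : T.encard ≤ (T ∩ {n : ℤ | 0 ≤ n}).encard + (T ∩ {n : ℤ | n ≤ 0}).encard :=
      le_trans (Set.encard_mono hsplit) (Set.encard_union_le _ _)
    calc (T.encard : ℝ≥0∞)
        ≤ ((T ∩ {n : ℤ | 0 ≤ n}).encard : ℝ≥0∞) + ((T ∩ {n : ℤ | n ≤ 0}).encard : ℝ≥0∞) := by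
          rw [← ENat.toENNReal_add]
          exact_mod_cast ENat.toENNReal_le.mpr hT2
    _ ≤ ENNReal.ofReal (2 * Dfun t h + 1) + ENNReal.ofReal (2 * Dfun t h + 1) :=
          add_le_add (int_encard_le hDpos hpos) (int_encard_le hDpos hneg)
  calc ((lamSet t s ∩ Metric.ball x h).encard : ℝ≥0∞) ≤ (T.encard : ℝ≥0∞) :=
        ENat.toENNReal_le.mpr hcard
  _ ≤ ENNReal.ofReal (2 * Dfun t h + 1) + ENNReal.ofReal (2 * Dfun t h + 1) := hcardT
  _ = ENNReal.ofReal (2 * (2 * Dfun t h + 1)) := by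
        rw [← ENNReal.ofReal_add (by linarith) (by linarith)]
        congr 1
        ring

lemma count_lower (t s : ℝ) (ht0 : 0 < t) (ht1 : t ≤ 1) (h : ℝ) (hh : 2 ≤ h) :
    ENNReal.ofReal ((h/2) ^ t)
      ≤ ((lamSet t s ∩ Metric.ball (pt 0 s) h).encard : ℝ≥0∞) := by
  set N : ℕ := ⌈(h/2) ^ t⌉₊ with hN
  have hhpos : (0:ℝ) < h := by linarith
  have hh2 : (1:ℝ) ≤ h/2 := by linarith
  have hsub : (PP t s) '' (↑(Finset.Ico (0:ℤ) (N:ℤ)) : Set ℤ)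
      ⊆ lamSet t s ∩ Metric.ball (pt 0 s) h := by
    rintro y ⟨n, hn, rfl⟩
    refine ⟨⟨n, rfl⟩, ?_⟩
    rw [Finset.coe_Ico, Set.mem_Ico] at hn
    obtain ⟨hn0, hnN⟩ := hn
    have hnr : (0:ℝ) ≤ (n:ℝ) := by exact_mod_cast hn0
    have hlt : (n:ℝ) < (h/2)^t := by
      have h1 : (n:ℝ) ≤ (N:ℝ) - 1 := by
        have : n ≤ (N:ℤ) - 1 := by omega
        exact_mod_cast this
      have h2 : (N:ℝ) < (h/2)^t + 1 :=
        Nat.ceil_lt_add_one (Real.rpow_nonneg (by linarith) t)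
      linarith
    have hgf : gf t n ≤ h/2 := by
      rw [gf_of_nonneg (ne_of_gt ht0) hn0]
      have h3 : (n:ℝ) ^ (1/t) ≤ ((h/2)^t) ^ (1/t) :=
        Real.rpow_le_rpow hnr hlt.le (by positivity)
      rw [← Real.rpow_mul (by linarith : (0:ℝ) ≤ h/2), mul_one_div,
        div_self (ne_of_gt ht0), Real.rpow_one] at h3
      exact h3
    have hgf0 : 0 ≤ gf t n := by
      rw [gf_of_nonneg (ne_of_gt ht0) hn0]
      exact Real.rpow_nonneg hnr _
    have hnle : (n:ℝ) ≤ h/2 := by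
      have h4 : (h/2)^t ≤ (h/2)^(1:ℝ) := Real.rpow_le_rpow_of_exponent_le hh2 ht1
      rw [Real.rpow_one] at h4
      linarith
    rw [Metric.mem_ball, EuclideanSpace.dist_eq]
    have h5 : dist (PP t s n 0) (pt 0 s 0) ^ 2 ≤ (h/2)^2 := by
      rw [show dist (PP t s n 0) (pt 0 s 0) = |(n:ℝ) - 0| from Real.dist_eq _ _,
        sub_zero, _root_.abs_of_nonneg hnr]
      exact pow_le_pow_left₀ hnr hnle 2
    have h6 : dist (PP t s n 1) (pt 0 s 1) ^ 2 ≤ (h/2)^2 := by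
      rw [show dist (PP t s n 1) (pt 0 s 1) = |gf t n + s - s| from Real.dist_eq _ _,
        add_sub_cancel_right, _root_.abs_of_nonneg hgf0]
      exact pow_le_pow_left₀ hgf0 hgf 2
    rw [show Finset.univ.sum (fun j => dist (PP t s n j) (pt 0 s j) ^ 2)
        = dist (PP t s n 0) (pt 0 s 0) ^ 2 + dist (PP t s n 1) (pt 0 s 1) ^ 2 from
        Fin.sum_univ_two _]
    rw [Real.sqrt_lt' hhpos]
    nlinarith
  have h1 : ((N:ℕ∞) : ℝ≥0∞) ≤ ((lamSet t s ∩ Metric.ball (pt 0 s) h).encard : ℝ≥0∞) := by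
    apply ENat.toENNReal_le.mpr
    calc (N : ℕ∞) = ((Finset.Ico (0:ℤ) (N:ℤ)).card : ℕ∞) := by
          rw [Int.card_Ico]
          simp
    _ = (↑(Finset.Ico (0:ℤ) (N:ℤ)) : Set ℤ).encard :=
          (Set.encard_coe_eq_coe_finsetCard _).symm
    _ = ((PP t s) '' (↑(Finset.Ico (0:ℤ) (N:ℤ)) : Set ℤ)).encard :=
          ((PP_inj t s).encard_image _).symm
    _ ≤ _ := Set.encard_mono hsub
  refine le_trans ?_ h1
  rw [show ((N:ℕ∞) : ℝ≥0∞) = ((N:ℕ) : ℝ≥0∞) from by simp, ← ENNReal.ofReal_natCast]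
  exact ENNReal.ofReal_le_ofReal (Nat.le_ceil _)

lemma density_le_of_bound (Λ : Set Plane) (r C : ℝ)
    (hb : ∀ h : ℝ, 1 ≤ h → ∀ x : Plane,
      ((Λ ∩ Metric.ball x h).encard : ℝ≥0∞) ≤ ENNReal.ofReal (C * h ^ r)) :
    beurlingDensity r Λ ≤ ENNReal.ofReal C := by
  unfold beurlingDensity
  refine Filter.limsup_le_of_le (by isBoundedDefault) ?_
  filter_upwards [Filter.eventually_ge_atTop (1:ℝ)] with h hh
  apply iSup_le
  intro x
  have hpos : 0 < h ^ r := Real.rpow_pos_of_pos (by linarith) r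
  calc ((Λ ∩ Metric.ball x h).encard : ℝ≥0∞) / ENNReal.ofReal (h ^ r)
      ≤ ENNReal.ofReal (C * h ^ r) / ENNReal.ofReal (h ^ r) :=
        ENNReal.div_le_div_right (hb h hh x) _
  _ = ENNReal.ofReal (C * h ^ r / h ^ r) := (ENNReal.ofReal_div_of_pos hpos).symm
  _ = ENNReal.ofReal C := by rw [mul_div_assoc, div_self (ne_of_gt hpos), mul_one]

lemma density_ne_top_pos (t s r : ℝ) (ht0 : 0 < t) (ht1 : t ≤ 1) (hrt : t ≤ r) :
    beurlingDensity r (lamSet t s) ≠ ⊤ := by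
  have hb : ∀ h : ℝ, 1 ≤ h → ∀ x : Plane,
      (((lamSet t s) ∩ Metric.ball x h).encard : ℝ≥0∞) ≤ ENNReal.ofReal (10 * h ^ r) := by
    intro h hh x
    refine le_trans (count_upper t s ht0.le ht1 x h hh) (ENNReal.ofReal_le_ofReal ?_)
    have hD : Dfun t h = (2*h) ^ t := if_neg (ne_of_gt ht0)
    have h1 : (2*h) ^ t = 2 ^ t * h ^ t :=
      Real.mul_rpow (by norm_num) (by linarith)
    have h2 : (2:ℝ) ^ t ≤ 2 := by
      have := Real.rpow_le_rpow_of_exponent_le (by norm_num : (1:ℝ) ≤ 2) ht1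
      rwa [Real.rpow_one] at this
    have h3 : (1:ℝ) ≤ h ^ t := Real.one_le_rpow hh ht0.le
    have h4 : h ^ t ≤ h ^ r := Real.rpow_le_rpow_of_exponent_le hh hrt
    have h5 : (0:ℝ) ≤ h ^ t := by linarith
    have h6 : (2:ℝ) ^ t ≥ 0 := Real.rpow_nonneg (by norm_num) t
    rw [hD, h1]
    nlinarith
  exact ne_top_of_le_ne_top (by simp) (density_le_of_bound _ r 10 hb)

lemma density_ne_top_zero (s r : ℝ) (hr : 0 < r) :
    beurlingDensity r (lamSet 0 s) ≠ ⊤ := by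
  set C : ℝ := 2 * (2 * ((1/r) * (3 ^ r)) + 1) + 2 with hC
  have hb : ∀ h : ℝ, 1 ≤ h → ∀ x : Plane,
      (((lamSet 0 s) ∩ Metric.ball x h).encard : ℝ≥0∞) ≤ ENNReal.ofReal (C * h ^ r) := by
    intro h hh x
    refine le_trans (count_upper 0 s le_rfl zero_le_one x h hh) (ENNReal.ofReal_le_ofReal ?_)
    have hD : Dfun 0 h = Real.log (1 + 2*h) := if_pos rfl
    have hpos : (0:ℝ) < 1 + 2*h := by linarith
    have h1 : Real.log (1 + 2*h) = (1/r) * Real.log ((1 + 2*h) ^ r) := by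
      rw [Real.log_rpow hpos]
      field_simp
    have h2 : Real.log ((1 + 2*h) ^ r) ≤ (1 + 2*h) ^ r - 1 :=
      Real.log_le_sub_one_of_pos (Real.rpow_pos_of_pos hpos r)
    have h3 : (1 + 2*h) ^ r ≤ (3*h) ^ r :=
      Real.rpow_le_rpow (by linarith) (by linarith) hr.le
    have h4 : (3*h) ^ r = 3 ^ r * h ^ r := Real.mul_rpow (by norm_num) (by linarith)
    have h5 : (1:ℝ) ≤ h ^ r := Real.one_le_rpow hh hr.le
    have h6 : Real.log (1 + 2*h) ≤ (1/r) * (3 ^ r) * h ^ r := by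
      rw [h1]
      have h7 : Real.log ((1 + 2*h) ^ r) ≤ 3 ^ r * h ^ r := by
        rw [h4] at h3
        linarith
      have h8 : (0:ℝ) < 1/r := by positivity
      calc (1/r) * Real.log ((1 + 2*h) ^ r) ≤ (1/r) * (3 ^ r * h ^ r) := by
            apply mul_le_mul_of_nonneg_left h7 h8.le
      _ = (1/r) * (3 ^ r) * h ^ r := by ring
    rw [hD]
    have h10 : C * h^r = 4*((1/r)*(3 ^ r)*h^r) + 4*(h^r) := by rw [hC]; ring
    rw [h10]
    linarith [h6, h5]
  exact ne_top_of_le_ne_top (by simp) (density_le_of_bound _ r C hb)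

lemma density_top (t s r : ℝ) (ht1 : t ≤ 1) (hr0 : 0 < r) (hrt : r < t) :
    beurlingDensity r (lamSet t s) = ⊤ := by
  have ht0 : 0 < t := lt_trans hr0 hrt
  have hlow : ∀ h : ℝ, 2 ≤ h →
      ENNReal.ofReal ((1/(2:ℝ)^t) * h^(t-r)) ≤
        ⨆ x : Plane, (((lamSet t s) ∩ Metric.ball x h).encard : ℝ≥0∞) /
          ENNReal.ofReal (h ^ r) := by
    intro h hh
    have hhpos : (0:ℝ) < h := by linarith
    have hrp : (0:ℝ) < h ^ r := Real.rpow_pos_of_pos hhpos r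
    have h2t : (0:ℝ) < (2:ℝ) ^ t := Real.rpow_pos_of_pos (by norm_num) t
    refine le_trans ?_ (le_iSup (fun x : Plane =>
      (((lamSet t s) ∩ Metric.ball x h).encard : ℝ≥0∞) / ENNReal.ofReal (h ^ r)) (pt 0 s))
    have hval : (1/(2:ℝ)^t) * h^(t-r) = ((h/2) ^ t) / (h ^ r) := by
      rw [Real.div_rpow hhpos.le (by norm_num), Real.rpow_sub hhpos]
      field_simp
    rw [hval, ENNReal.ofReal_div_of_pos hrp]
    exact ENNReal.div_le_div_right (count_lower t s ht0 ht1 h hh) _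
  have htend : Filter.Tendsto (fun h : ℝ => ENNReal.ofReal ((1/(2:ℝ)^t) * h^(t-r)))
      Filter.atTop (nhds ⊤) := by
    apply ENNReal.tendsto_ofReal_atTop.comp
    exact Filter.Tendsto.const_mul_atTop (by positivity)
      (tendsto_rpow_atTop (by linarith))
  have hlim : Filter.limsup (fun h : ℝ => ENNReal.ofReal ((1/(2:ℝ)^t) * h^(t-r)))
      Filter.atTop = ⊤ := htend.limsup_eq
  unfold beurlingDensity
  rw [← top_le_iff, ← hlim]
  refine Filter.limsup_le_limsup ?_
  filter_upwards [Filter.eventually_ge_atTop (2:ℝ)] with h hh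
  exact hlow h hh

lemma dim_eq (t s : ℝ) (ht0 : 0 ≤ t) (ht1 : t ≤ 1) : beurlingDim (lamSet t s) = t := by
  rcases eq_or_lt_of_le ht0 with h0 | h0
  · have hempty : {r : ℝ | 0 < r ∧ beurlingDensity r (lamSet t s) = ⊤} = ∅ := by
      apply Set.eq_empty_iff_forall_notMem.mpr
      rintro r ⟨hr, htop⟩
      rw [← h0] at htop
      exact density_ne_top_zero s r hr htop
    rw [beurlingDim, hempty, Real.sSup_empty, h0]
  · have hset : {r : ℝ | 0 < r ∧ beurlingDensity r (lamSet t s) = ⊤} = Set.Ioo 0 t := by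
      ext r
      simp only [Set.mem_setOf_eq, Set.mem_Ioo]
      constructor
      · rintro ⟨hr, htop⟩
        refine ⟨hr, ?_⟩
        by_contra hge
        exact density_ne_top_pos t s r h0 ht1 (not_lt.mp hge) htop
      · rintro ⟨hr, hrt⟩
        exact ⟨hr, density_top t s r ht1 hr hrt⟩
    rw [beurlingDim, hset, csSup_Ioo h0]

lemma isSpectrum_lamSet (t s : ℝ) : IsSpectrum muRB (lamSet t s) := by
  constructor
  · apply isOrthogonalSet_of
    rintro a ⟨m, rfl⟩ b ⟨n, rfl⟩ hab
    have hmn : m ≠ n := fun hc => hab (by rw [hc])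
    have h0m : PP t s m 0 = (m : ℝ) := rfl
    have h0n : PP t s n 0 = (n : ℝ) := rfl
    constructor
    · rw [h0m, h0n]
      exact fun hc => hmn (Int.cast_injective (α := ℝ) hc)
    · exact ⟨m - n, by rw [h0m, h0n]; push_cast; ring⟩
  · exact span_top _ (fun n => ⟨PP t s n, ⟨n, rfl⟩, rfl⟩)

lemma lamSet_inj (t : ℝ) : Function.Injective (lamSet t) := by
  intro s s' hss
  have h1 : PP t s 0 ∈ lamSet t s' := by
    rw [← hss]
    exact ⟨0, rfl⟩
  obtain ⟨n, hn⟩ := h1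
  have h0 : ((n : ℝ)) = (((0:ℤ)) : ℝ) := congrFun (congrArg WithLp.ofLp hn) 0
  have hn0 : n = 0 := by exact_mod_cast h0
  have h2 := congrFun (congrArg WithLp.ofLp hn) 1
  rw [hn0] at h2
  have h3 : gf t 0 + s' = gf t 0 + s := h2
  linarith [h3]

lemma mk_plane_fun : Cardinal.mk (ℕ → Plane) ≤ Cardinal.continuum := by
  have e1 : (ℕ → Plane) ≃ (ℕ → (Fin 2 → ℝ)) :=
    Equiv.piCongrRight fun _ => WithLp.equiv 2 _
  have e2 : (ℕ × Fin 2 → ℝ) ≃ (ℕ → (Fin 2 → ℝ)) := Equiv.curry _ _ _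
  calc Cardinal.mk (ℕ → Plane) = Cardinal.mk (ℕ × Fin 2 → ℝ) :=
        Cardinal.mk_congr (e1.trans e2.symm)
  _ = Cardinal.mk ℝ ^ Cardinal.mk (ℕ × Fin 2) := (Cardinal.power_def _ _).symm
  _ = Cardinal.continuum ^ Cardinal.aleph0 := by
        rw [Cardinal.mk_real, Cardinal.mk_eq_aleph0]
  _ = Cardinal.continuum := Cardinal.continuum_power_aleph0
  _ ≤ Cardinal.continuum := le_rfl

lemma mk_levelset_le (t : ℝ) :
    Cardinal.mk {Λ : Set Plane // IsSpectrum muRB Λ ∧ beurlingDim Λ = t}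
      ≤ Cardinal.continuum := by
  classical
  set S := {Λ : Set Plane // IsSpectrum muRB Λ ∧ beurlingDim Λ = t} with hS
  have hcnt : ∀ Λ : S, (Λ.1).Countable := fun Λ =>
    countable_of_isOrthogonalSet Λ.2.1.1
  have hJex : ∀ Λ : S, Λ.1.Nonempty → ∃ f : ℕ → Plane, Λ.1 = Set.range f := fun Λ h =>
    (hcnt Λ).exists_eq_range h
  let J : S → Option (ℕ → Plane) := fun Λ =>
    if h : Λ.1.Nonempty then some (hJex Λ h).choose else none
  have hJinj : Function.Injective J := by
    intro A B hAB
    apply Subtype.ext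
    by_cases hA : A.1.Nonempty <;> by_cases hB : B.1.Nonempty
    · have h1 := (hJex A hA).choose_spec
      have h2 := (hJex B hB).choose_spec
      simp only [J, dif_pos hA, dif_pos hB, Option.some.injEq] at hAB
      rw [h1, h2, hAB]
    · simp only [J, dif_pos hA, dif_neg hB] at hAB
      exact absurd hAB (Option.some_ne_none _)
    · simp only [J, dif_pos hB, dif_neg hA] at hAB
      exact absurd hAB.symm (Option.some_ne_none _)
    · rw [Set.not_nonempty_iff_eq_empty] at hA hB
      rw [hA, hB]
  calc Cardinal.mk S ≤ Cardinal.mk (Option (ℕ → Plane)) :=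
        Cardinal.mk_le_of_injective hJinj
  _ = Cardinal.mk (ℕ → Plane) + 1 := Cardinal.mk_option
  _ ≤ Cardinal.continuum + 1 := add_le_add_left mk_plane_fun 1
  _ = Cardinal.continuum := Cardinal.add_one_eq Cardinal.aleph0_le_continuum

lemma mk_levelset_ge (t : ℝ) (ht0 : 0 ≤ t) (ht1 : t ≤ 1) :
    Cardinal.continuum
      ≤ Cardinal.mk {Λ : Set Plane // IsSpectrum muRB Λ ∧ beurlingDim Λ = t} := by
  have hinj : Function.Injective (fun s : ℝ =>
      (⟨lamSet t s, isSpectrum_lamSet t s, dim_eq t s ht0 ht1⟩ :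
        {Λ : Set Plane // IsSpectrum muRB Λ ∧ beurlingDim Λ = t})) := by
    intro s s' h
    exact lamSet_inj t (congrArg Subtype.val h)
  calc Cardinal.continuum = Cardinal.mk ℝ := Cardinal.mk_real.symm
  _ ≤ _ := Cardinal.mk_le_of_injective hinj

end SpecProof
end

/-- For every `t ∈ [0,1]`, the level set
`L_t = {Λ : Λ is a spectrum of μ_{R,B} and dim_Be(Λ) = t}` has the cardinality of the
continuum. -/
theorem levelSet_spectra_muRB_continuum (t : ℝ) (ht : t ∈ Set.Icc (0 : ℝ) 1) :
    Cardinal.mk {Λ : Set Plane // IsSpectrum muRB Λ ∧ beurlingDim Λ = t} =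
      Cardinal.continuum :=
  le_antisymm (SpecProof.mk_levelset_le t) (SpecProof.mk_levelset_ge t ht.1 ht.2)
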